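/- Let 𝕂 be a field equipped with a non-Archimedean absolute value and let G be a discrete group admitting a left-invariant normed 𝕂-mean. Let F be a normed 𝕂-vector space on which G acts by linear isometries, and let E = F* be its continuous dual, equipped with the operator norm and the dual G-action (g·λ)(x) = λ(g⁻¹·x). Then for every n ≥ 1, every bounded G-equivariant function f : G^{n+1} → E (equivariance meaning f(g·g₀, …, g·gₙ) = g·f(g₀, …, gₙ) for all g) satisfying δf = 0, where (δf)(g₀,…,g_{n+1}) = Σ_{i=0}^{n+1} (−1)^i f(g₀,…,ĝ_i,…,g_{n+1}) (omitting the i-th entry), is of the form f = δu for some bounded G-equivariant function u : G^n → E. In other words, the bounded cohomology H^n_b(G,E) vanishes for all n ≥ 1 and every dual normed 𝕂[G]-module E. -/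

import Mathlib

open BoundedContinuousFunction

/-- The left translate of a bounded continuous function: `(leftTranslate 𝕂 g f) x = f (g⁻¹ * x)`. -/
noncomputable def leftTranslate {G : Type*} [Group G] [TopologicalSpace G] [IsTopologicalGroup G]
    (𝕂 : Type*) [NormedField 𝕂] (g : G) (f : G →ᵇ 𝕂) : G →ᵇ 𝕂 :=
  f.compContinuous ⟨fun x => g⁻¹ * x, continuous_mul_left g⁻¹⟩

/-- `m` is a left-invariant normed `𝕂`-mean on `G`: a bounded (equivalently, continuous)
linear functional on the space of bounded continuous `𝕂`-valued functions on `G`, sending the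
constant function `𝟙_G` to `1`, and invariant under left translation. -/
def IsInvariantMean (𝕂 : Type*) [NormedField 𝕂] (G : Type*) [Group G] [TopologicalSpace G]
    [IsTopologicalGroup G] (m : (G →ᵇ 𝕂) →ₗ[𝕂] 𝕂) : Prop :=
  (∃ C : ℝ, ∀ f : G →ᵇ 𝕂, ‖m f‖ ≤ C * ‖f‖) ∧
    m (BoundedContinuousFunction.const G (1 : 𝕂)) = 1 ∧
    ∀ (g : G) (f : G →ᵇ 𝕂), m (leftTranslate 𝕂 g f) = m f

/-- The operator norm of the linear functional `m` is at most `C`. -/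
def MeanNormLE (𝕂 : Type*) [NormedField 𝕂] (G : Type*) [Group G] [TopologicalSpace G]
    [IsTopologicalGroup G] (m : (G →ᵇ 𝕂) →ₗ[𝕂] 𝕂) (C : ℝ) : Prop :=
  ∀ f : G →ᵇ 𝕂, ‖m f‖ ≤ C * ‖f‖

/-- If a discrete group `G` admits a left-invariant normed `𝕂`-mean, then for
every dual normed `𝕂[G]`-module `E = F*` (continuous linear functionals on `F` with the operator
norm, with dual action `(g·λ)(v) = λ(g⁻¹·v)`) and every `n ≥ 1`, every bounded `G`-equivariant
homogeneous `n`-cocycle with values in `E` is the coboundary of a bounded `G`-equivariant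
homogeneous `(n-1)`-cochain; i.e. `H^n_b(G, E) = 0`. (Boundedness of a family of functionals
with operator norm `≤ C` is expressed pointwise as `‖f x v‖ ≤ C * ‖v‖`.) -/
theorem bounded_cohomology_vanishes_of_invariantMean
    (𝕂 : Type*) [NormedField 𝕂] [IsUltrametricDist 𝕂]
    (G : Type*) [Group G] [TopologicalSpace G] [DiscreteTopology G] [IsTopologicalGroup G]
    (hmean : ∃ m : (G →ᵇ 𝕂) →ₗ[𝕂] 𝕂, IsInvariantMean 𝕂 G m)
    (F : Type*) [NormedAddCommGroup F] [NormedSpace 𝕂 F] [IsUltrametricDist F]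
    (ρ : G →* (F ≃ₗᵢ[𝕂] F))
    (n : ℕ)
    (f : (Fin (n + 2) → G) → (F →L[𝕂] 𝕂))
    (hbdd : ∃ C : ℝ, ∀ (x : Fin (n + 2) → G) (v : F), ‖f x v‖ ≤ C * ‖v‖)
    (hequiv : ∀ (g : G) (x : Fin (n + 2) → G) (v : F),
      f (fun j => g * x j) v = f x (ρ g⁻¹ v))
    (hcocycle : ∀ x : Fin (n + 3) → G,
      (∑ i : Fin (n + 3), ((-1 : ℤ) ^ (i : ℕ)) • f (fun j => x (i.succAbove j))) = 0) :
    ∃ u : (Fin (n + 1) → G) → (F →L[𝕂] 𝕂),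
      (∃ C : ℝ, ∀ (x : Fin (n + 1) → G) (v : F), ‖u x v‖ ≤ C * ‖v‖) ∧
      (∀ (g : G) (x : Fin (n + 1) → G) (v : F),
        u (fun j => g * x j) v = u x (ρ g⁻¹ v)) ∧
      (∀ x : Fin (n + 2) → G,
        f x = ∑ i : Fin (n + 2), ((-1 : ℤ) ^ (i : ℕ)) • u (fun j => x (i.succAbove j))) := by
  classical
  obtain ⟨m, ⟨C0, hC0⟩, hone, hinv⟩ := hmean
  obtain ⟨C, hC⟩ := hbdd
  set C' : ℝ := max C 0 with hC'def
  have hC' : ∀ (x : Fin (n + 2) → G) (v : F), ‖f x v‖ ≤ C' * ‖v‖ := fun x v =>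
    (hC x v).trans (mul_le_mul_of_nonneg_right (le_max_left _ _) (norm_nonneg v))
  set C1 : ℝ := max C0 0 with hC1def
  have hC1 : ∀ φ : G →ᵇ 𝕂, ‖m φ‖ ≤ C1 * ‖φ‖ := fun φ =>
    (hC0 φ).trans (mul_le_mul_of_nonneg_right (le_max_left _ _) (norm_nonneg φ))
  -- the auxiliary bounded functions
  let h : (Fin (n + 1) → G) → F → (G →ᵇ 𝕂) := fun x v =>
    BoundedContinuousFunction.ofNormedAddCommGroup (fun g => f (Fin.cons g x) v)
      continuous_of_discreteTopology (C' * ‖v‖) (fun g => hC' _ v)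
  have h_apply : ∀ x v g, h x v g = f (Fin.cons g x) v := fun _ _ _ => rfl
  have h_norm : ∀ x v, ‖h x v‖ ≤ C' * ‖v‖ := fun x v =>
    BoundedContinuousFunction.norm_ofNormedAddCommGroup_le _
      (mul_nonneg (le_max_right _ _) (norm_nonneg v)) _
  -- the primitive
  let u : (Fin (n + 1) → G) → (F →L[𝕂] 𝕂) := fun x =>
    LinearMap.mkContinuous
      { toFun := fun v => m (h x v)
        map_add' := by
          intro v w
          have hadd : h x (v + w) = h x v + h x w := by
            ext g; simp [h_apply]
          show m (h x (v + w)) = m (h x v) + m (h x w)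
          rw [hadd, map_add]
        map_smul' := by
          intro c v
          have hsmul : h x (c • v) = c • h x v := by
            ext g; simp [h_apply]
          show m (h x (c • v)) = (RingHom.id 𝕂) c • m (h x v)
          rw [RingHom.id_apply, hsmul, map_smul] }
      (C1 * C')
      (fun v => by
        refine (hC1 (h x v)).trans ?_
        rw [mul_assoc]
        exact mul_le_mul_of_nonneg_left (h_norm x v) (le_max_right _ _))
  have hu_apply : ∀ x v, u x v = m (h x v) := fun _ _ => rfl
  have hm_const : ∀ c : 𝕂, m (BoundedContinuousFunction.const G c) = c := by
    intro c
    have : BoundedContinuousFunction.const G c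
        = c • BoundedContinuousFunction.const G (1 : 𝕂) := by
      ext g; simp
    rw [this, map_smul, hone, smul_eq_mul, mul_one]
  refine ⟨u, ⟨C1 * C', fun x v => by
    rw [hu_apply]
    refine (hC1 (h x v)).trans ?_
    rw [mul_assoc]
    exact mul_le_mul_of_nonneg_left (h_norm x v) (le_max_right _ _)⟩, ?_, ?_⟩
  · -- equivariance
    intro s x v
    rw [hu_apply, hu_apply]
    have : h (fun j => s * x j) v = leftTranslate 𝕂 s (h x ((ρ s⁻¹) v)) := by
      ext g
      show f (Fin.cons g fun j => s * x j) v = f (Fin.cons (s⁻¹ * g) x) ((ρ s⁻¹) v)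
      have harg : (Fin.cons g fun j => s * x j)
          = (fun j => s * (Fin.cons (s⁻¹ * g) x : Fin (n + 2) → G) j) := by
        funext j
        refine Fin.cases ?_ (fun j' => ?_) j
        · simp [mul_inv_cancel_left]
        · simp
      rw [harg, hequiv s (Fin.cons (s⁻¹ * g) x) v]
    rw [this, hinv]
  · -- coboundary
    intro x
    have key : ∀ (g : G) (v : F),
        f x v = ∑ i : Fin (n + 2),
          ((-1 : ℤ) ^ (i : ℕ)) • f (Fin.cons g fun j => x (i.succAbove j)) v := by
      intro g v
      have h0 := congrArg (fun T : F →L[𝕂] 𝕂 => T v) (hcocycle (Fin.cons g x))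
      simp only [ContinuousLinearMap.coe_sum', Finset.sum_apply,
        ContinuousLinearMap.coe_smul', Pi.smul_apply, ContinuousLinearMap.zero_apply] at h0
      rw [Fin.sum_univ_succ] at h0
      have e0 : (fun j : Fin (n + 2) => (Fin.cons g x : Fin (n + 3) → G) ((0 : Fin (n + 3)).succAbove j)) = x := by
        funext j; simp [Fin.succAbove_zero]
      have es : ∀ k : Fin (n + 2),
          (fun j : Fin (n + 2) => (Fin.cons g x : Fin (n + 3) → G) ((Fin.succ k).succAbove j))
            = (Fin.cons g (fun j => x (k.succAbove j)) : Fin (n + 2) → G) := by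
        intro k
        funext j
        refine Fin.cases ?_ (fun j' => ?_) j
        · simp [Fin.succ_succAbove_zero]
        · simp [Fin.succ_succAbove_succ]
      rw [e0] at h0
      simp only [Fin.val_zero, pow_zero, one_smul, Fin.val_succ] at h0
      have : f x v = -∑ k : Fin (n + 2),
          ((-1 : ℤ) ^ ((k : ℕ) + 1)) • f (fun j : Fin (n + 2) => (Fin.cons g x : Fin (n + 3) → G) ((Fin.succ k).succAbove j)) v := by
        linear_combination h0
      rw [this, ← Finset.sum_neg_distrib]
      refine Finset.sum_congr rfl (fun k _ => ?_)
      rw [es k]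
      rw [pow_succ, mul_neg_one, neg_smul, neg_neg]
    -- now apply the mean
    ext v
    have hbcf : BoundedContinuousFunction.const G (f x v)
        = ∑ i : Fin (n + 2), ((-1 : ℤ) ^ (i : ℕ)) • h (fun j => x (i.succAbove j)) v := by
      ext g
      rw [BoundedContinuousFunction.const_apply, key g v]
      simp [h_apply]
    have := congrArg m hbcf
    rw [hm_const, map_sum] at this
    simp only [map_zsmul] at this
    rw [this]
    simp only [ContinuousLinearMap.coe_sum', Finset.sum_apply,
      ContinuousLinearMap.coe_smul', Pi.smul_apply]
    exact Finset.sum_congr rfl (fun i _ => by rw [hu_apply])
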